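/- Let Ω = (0,R) × (−a,a) and ψ₁ a smooth solution of −ψ₁,rr − (3/r)ψ₁,r − ψ₁,zz = ω₁ with ψ₁ = 0 on r = R and z = ±a, and ψ₁,r vanishing at r = 0. Then 3 ∫_Ω |ψ₁,r / r|² r dr dz + (1/2) ∫_{−a}^a ψ₁,r(R,z)² dz + (1/2) ∫_{−a}^a ψ₁,z(0,z)² dz = −∫_Ω ω₁ (ψ₁,r / r) r dr dz, and consequently ∫_Ω |ψ₁,r/r|² r dr dz + ∫_{−a}^a (ψ₁,r(R,z)² + ψ₁,z(0,z)²) dz ≤ c ∫_Ω ω₁² r dr dz. -/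

import Mathlib

open MeasureTheory Set

/-- Partial derivative in the first (radial) variable. -/
noncomputable def pdr (f : ℝ → ℝ → ℝ) : ℝ → ℝ → ℝ := fun r z => deriv (fun s => f s z) r

/-- Partial derivative in the second (axial) variable. -/
noncomputable def pdz (f : ℝ → ℝ → ℝ) : ℝ → ℝ → ℝ := fun r z => deriv (fun w => f r w) z

section helpers
variable {f : ℝ → ℝ → ℝ}

lemma myDiff (h : ContDiff ℝ (⊤:ℕ∞) (Function.uncurry f)) :
    Differentiable ℝ (Function.uncurry f) := h.differentiable (by simp)

lemma hasDerivAt_slice_r (h : ContDiff ℝ (⊤:ℕ∞) (Function.uncurry f))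
    (r z : ℝ) : HasDerivAt (fun s => f s z) (fderiv ℝ (Function.uncurry f) (r,z) (1,0)) r := by
  have hd : HasFDerivAt (Function.uncurry f) (fderiv ℝ (Function.uncurry f) (r,z)) (r,z) :=
    (myDiff h (r,z)).hasFDerivAt
  have hc : HasDerivAt (fun s : ℝ => (s, z)) ((1:ℝ),(0:ℝ)) r := by
    simpa using ((hasDerivAt_id r).prodMk (hasDerivAt_const r z))
  simpa [Function.comp_def] using hd.comp_hasDerivAt r hc

lemma hasDerivAt_slice_z (h : ContDiff ℝ (⊤:ℕ∞) (Function.uncurry f))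
    (r z : ℝ) : HasDerivAt (fun w => f r w) (fderiv ℝ (Function.uncurry f) (r,z) (0,1)) z := by
  have hd : HasFDerivAt (Function.uncurry f) (fderiv ℝ (Function.uncurry f) (r,z)) (r,z) :=
    (myDiff h (r,z)).hasFDerivAt
  have hc : HasDerivAt (fun w : ℝ => (r, w)) ((0:ℝ),(1:ℝ)) z := by
    simpa using ((hasDerivAt_const z r).prodMk (hasDerivAt_id z))
  simpa [Function.comp_def] using hd.comp_hasDerivAt z hc

lemma pdr_eq (h : ContDiff ℝ (⊤:ℕ∞) (Function.uncurry f)) (r z : ℝ) :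
    pdr f r z = fderiv ℝ (Function.uncurry f) (r,z) (1,0) :=
  (hasDerivAt_slice_r h r z).deriv

lemma pdz_eq (h : ContDiff ℝ (⊤:ℕ∞) (Function.uncurry f)) (r z : ℝ) :
    pdz f r z = fderiv ℝ (Function.uncurry f) (r,z) (0,1) :=
  (hasDerivAt_slice_z h r z).deriv

lemma contDiff_fderiv_apply (h : ContDiff ℝ (⊤:ℕ∞) (Function.uncurry f)) (v : ℝ × ℝ) :
    ContDiff ℝ (⊤:ℕ∞) (fun p : ℝ × ℝ => fderiv ℝ (Function.uncurry f) p v) :=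
  (h.fderiv_right (mod_cast le_top)).clm_apply contDiff_const

lemma contDiff_pdr (h : ContDiff ℝ (⊤:ℕ∞) (Function.uncurry f)) :
    ContDiff ℝ (⊤:ℕ∞) (Function.uncurry (pdr f)) := by
  have heq : Function.uncurry (pdr f)
      = fun p : ℝ × ℝ => fderiv ℝ (Function.uncurry f) p (1,0) := by
    funext p; exact pdr_eq h p.1 p.2
  rw [heq]; exact contDiff_fderiv_apply h _

lemma contDiff_pdz (h : ContDiff ℝ (⊤:ℕ∞) (Function.uncurry f)) :
    ContDiff ℝ (⊤:ℕ∞) (Function.uncurry (pdz f)) := by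
  have heq : Function.uncurry (pdz f)
      = fun p : ℝ × ℝ => fderiv ℝ (Function.uncurry f) p (0,1) := by
    funext p; exact pdz_eq h p.1 p.2
  rw [heq]; exact contDiff_fderiv_apply h _

lemma hasDerivAt_pdr (h : ContDiff ℝ (⊤:ℕ∞) (Function.uncurry f)) (r z : ℝ) :
    HasDerivAt (fun s => f s z) (pdr f r z) r := by
  rw [pdr_eq h]; exact hasDerivAt_slice_r h r z

lemma hasDerivAt_pdz (h : ContDiff ℝ (⊤:ℕ∞) (Function.uncurry f)) (r z : ℝ) :
    HasDerivAt (fun w => f r w) (pdz f r z) z := by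
  rw [pdz_eq h]; exact hasDerivAt_slice_z h r z

lemma pdr_pdz_comm (h : ContDiff ℝ (⊤:ℕ∞) (Function.uncurry f)) (r z : ℝ) :
    pdr (pdz f) r z = pdz (pdr f) r z := by
  set F := Function.uncurry f with hF
  have hd : ∀ y, HasFDerivAt F (fderiv ℝ F y) y := fun y => (myDiff h y).hasFDerivAt
  have hdd : Differentiable ℝ (fderiv ℝ F) :=
    (h.fderiv_right (mod_cast le_top) : ContDiff ℝ (⊤:ℕ∞) (fderiv ℝ F)).differentiable
      (by simp)
  have h2 : HasFDerivAt (fderiv ℝ F) (fderiv ℝ (fderiv ℝ F) (r,z)) (r,z) := (hdd _).hasFDerivAt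
  have hsymm := second_derivative_symmetric hd h2 ((1:ℝ),(0:ℝ)) ((0:ℝ),(1:ℝ))
  have key : ∀ (v x : ℝ × ℝ),
      HasFDerivAt (fun p : ℝ × ℝ => fderiv ℝ F p v)
        ((fderiv ℝ (fderiv ℝ F) x).flip v) x := by
    intro v x
    have := ((hdd x).hasFDerivAt).clm_apply (hasFDerivAt_const v x)
    simpa using this
  have e1 : pdr (pdz f) r z = fderiv ℝ (fderiv ℝ F) (r,z) (1,0) (0,1) := by
    have hslice : (fun s : ℝ => pdz f s z) = fun s : ℝ => fderiv ℝ F (s,z) (0,1) := by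
      funext s; exact pdz_eq h s z
    have hcomp : HasDerivAt (fun s : ℝ => fderiv ℝ F (s,z) (0,1))
        (fderiv ℝ (fderiv ℝ F) (r,z) (1,0) (0,1)) r := by
      have hc : HasDerivAt (fun s : ℝ => (s, z)) ((1:ℝ),(0:ℝ)) r := by
        simpa using ((hasDerivAt_id r).prodMk (hasDerivAt_const r z))
      have := (key (0,1) (r,z)).comp_hasDerivAt r hc
      simpa [Function.comp_def] using this
    show deriv (fun s => pdz f s z) r = _
    rw [hslice]; exact hcomp.deriv
  have e2 : pdz (pdr f) r z = fderiv ℝ (fderiv ℝ F) (r,z) (0,1) (1,0) := by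
    have hslice : (fun w : ℝ => pdr f r w) = fun w : ℝ => fderiv ℝ F (r,w) (1,0) := by
      funext w; exact pdr_eq h r w
    have hcomp : HasDerivAt (fun w : ℝ => fderiv ℝ F (r,w) (1,0))
        (fderiv ℝ (fderiv ℝ F) (r,z) (0,1) (1,0)) z := by
      have hc : HasDerivAt (fun w : ℝ => (r, w)) ((0:ℝ),(1:ℝ)) z := by
        simpa using ((hasDerivAt_const z r).prodMk (hasDerivAt_id z))
      have := (key (1,0) (r,z)).comp_hasDerivAt z hc
      simpa [Function.comp_def] using this
    show deriv (fun w => pdr f r w) z = _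
    rw [hslice]; exact hcomp.deriv
  rw [e1, e2, hsymm]
end helpers

section integration
-- FTC over Ioo
lemma ftcIoo {F g : ℝ → ℝ} {c d : ℝ} (hcd : c ≤ d)
    (hder : ∀ x, HasDerivAt F (g x) x) (hcont : Continuous g) :
    ∫ x in Ioo c d, g x = F d - F c := by
  rw [← integral_Ioc_eq_integral_Ioo, ← intervalIntegral.integral_of_le hcd]
  exact intervalIntegral.integral_eq_sub_of_hasDerivAt (fun x _ => hder x)
    (hcont.intervalIntegrable _ _)

-- integrability of a continuous function on Ioo
lemma int1d {g : ℝ → ℝ} {c d : ℝ} (hc : Continuous g) : IntegrableOn g (Ioo c d) :=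
  ((hc.continuousOn).integrableOn_compact isCompact_Icc).mono_set Ioo_subset_Icc_self

-- integrability of bounded measurable function on Ioo
lemma int1d' {g : ℝ → ℝ} {c d C : ℝ} (hc : ContinuousOn g (Ioo c d))
    (hb : ∀ x ∈ Ioo c d, |g x| ≤ C) : IntegrableOn g (Ioo c d) := by
  apply Integrable.mono' (g := fun _ => C)
    (integrableOn_const (by simp [Real.volume_Ioo]))
    (hc.aestronglyMeasurable measurableSet_Ioo)
  rw [ae_restrict_iff' measurableSet_Ioo]
  exact Filter.Eventually.of_forall fun x hx => by simpa [Real.norm_eq_abs] using hb x hx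

-- integrability on product of Ioos, continuous case
lemma int2d {g : ℝ × ℝ → ℝ} {a₁ a₂ b₁ b₂ : ℝ} (hc : Continuous g) :
    Integrable g ((volume.restrict (Ioo a₁ a₂)).prod (volume.restrict (Ioo b₁ b₂))) := by
  rw [Measure.prod_restrict]
  exact ((hc.continuousOn).integrableOn_compact (isCompact_Icc.prod isCompact_Icc)).mono_set
    (prod_mono Ioo_subset_Icc_self Ioo_subset_Icc_self)

-- integrability on product of Ioos, bounded case
lemma int2d' {g : ℝ × ℝ → ℝ} {a₁ a₂ b₁ b₂ C : ℝ}
    (hc : ContinuousOn g (Ioo a₁ a₂ ×ˢ Ioo b₁ b₂))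
    (hb : ∀ p ∈ Ioo a₁ a₂ ×ˢ Ioo b₁ b₂, |g p| ≤ C) :
    Integrable g ((volume.restrict (Ioo a₁ a₂)).prod (volume.restrict (Ioo b₁ b₂))) := by
  rw [Measure.prod_restrict]
  have hms : MeasurableSet (Ioo a₁ a₂ ×ˢ Ioo b₁ b₂) := measurableSet_Ioo.prod measurableSet_Ioo
  apply Integrable.mono' (g := fun _ => C) _ (hc.aestronglyMeasurable hms)
  · rw [ae_restrict_iff' hms]
    exact Filter.Eventually.of_forall fun x hx => by simpa [Real.norm_eq_abs] using hb x hx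
  · refine integrableOn_const ?_
    rw [Measure.prod_prod]
    exact (ENNReal.mul_lt_top (by simp [Real.volume_Ioo]) (by simp [Real.volume_Ioo])).ne
end integration

/-- Identity (3.44) and the resulting estimate from Lemma 3.8. -/
theorem identity_344 (R a : ℝ) (hR : 0 < R) (ha : 0 < a)
    (ψ ω : ℝ → ℝ → ℝ)
    (hsm : ContDiff ℝ (⊤ : ℕ∞) (Function.uncurry ψ))
    (hpde : ∀ r ∈ Ioo 0 R, ∀ z ∈ Ioo (-a) a,
      -(pdr (pdr ψ) r z) - 3 / r * pdr ψ r z - pdz (pdz ψ) r z = ω r z)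
    (hbR : ∀ z ∈ Icc (-a) a, ψ R z = 0)
    (hba : ∀ r ∈ Icc 0 R, ψ r a = 0 ∧ ψ r (-a) = 0)
    (haxis : ∀ z ∈ Icc (-a) a, pdr ψ 0 z = 0) :
    (3 * ∫ z in Ioo (-a) a, ∫ r in Ioo (0:ℝ) R, (pdr ψ r z / r) ^ 2 * r)
      + (1 / 2) * (∫ z in Ioo (-a) a, (pdr ψ R z) ^ 2)
      + (1 / 2) * (∫ z in Ioo (-a) a, (pdz ψ 0 z) ^ 2)
      = -∫ z in Ioo (-a) a, ∫ r in Ioo (0:ℝ) R, ω r z * (pdr ψ r z / r) * r ∧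
    ∃ c > (0:ℝ),
      (∫ z in Ioo (-a) a, ∫ r in Ioo (0:ℝ) R, (pdr ψ r z / r) ^ 2 * r)
        + (∫ z in Ioo (-a) a, ((pdr ψ R z) ^ 2 + (pdz ψ 0 z) ^ 2))
        ≤ c * ∫ z in Ioo (-a) a, ∫ r in Ioo (0:ℝ) R, (ω r z) ^ 2 * r := by
  have hu : ContDiff ℝ (⊤:ℕ∞) (Function.uncurry (pdr ψ)) := contDiff_pdr hsm
  have hv : ContDiff ℝ (⊤:ℕ∞) (Function.uncurry (pdz ψ)) := contDiff_pdz hsm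
  have huu : ContDiff ℝ (⊤:ℕ∞) (Function.uncurry (pdr (pdr ψ))) := contDiff_pdr hu
  have hvv : ContDiff ℝ (⊤:ℕ∞) (Function.uncurry (pdz (pdz ψ))) := contDiff_pdz hv
  have hvr : ContDiff ℝ (⊤:ℕ∞) (Function.uncurry (pdr (pdz ψ))) := contDiff_pdr hv
  have huz : ContDiff ℝ (⊤:ℕ∞) (Function.uncurry (pdz (pdr ψ))) := contDiff_pdz hu
  -- continuity of slices
  have cr : ∀ {g : ℝ → ℝ → ℝ}, ContDiff ℝ (⊤:ℕ∞) (Function.uncurry g) →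
      ∀ z, Continuous (fun s : ℝ => g s z) := fun h z =>
    h.continuous.comp (continuous_id.prodMk continuous_const)
  have cz : ∀ {g : ℝ → ℝ → ℝ}, ContDiff ℝ (⊤:ℕ∞) (Function.uncurry g) →
      ∀ r, Continuous (fun w : ℝ => g r w) := fun h r =>
    h.continuous.comp (continuous_const.prodMk continuous_id)
  -- continuity with swapped arguments
  have cswap : ∀ {g : ℝ → ℝ → ℝ}, ContDiff ℝ (⊤:ℕ∞) (Function.uncurry g) →
      Continuous (fun q : ℝ × ℝ => g q.2 q.1) := fun h =>
    h.continuous.comp (continuous_snd.prodMk continuous_fst)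
  -- compact set and bounds
  set K : Set (ℝ × ℝ) := Icc (0:ℝ) R ×ˢ Icc (-a) a with hK
  have h00 : ((0:ℝ), (0:ℝ)) ∈ K := ⟨⟨le_refl 0, hR.le⟩, ⟨neg_nonpos_of_nonneg ha.le, ha.le⟩⟩
  obtain ⟨M1, hM1⟩ := (isCompact_Icc.prod isCompact_Icc).exists_bound_of_continuousOn
    (huu.continuous.continuousOn (s := K))
  obtain ⟨M2, hM2⟩ := (isCompact_Icc.prod isCompact_Icc).exists_bound_of_continuousOn
    (hvv.continuous.continuousOn (s := K))
  have hM1' : 0 ≤ M1 := le_trans (norm_nonneg _) (hM1 _ h00)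
  have hM2' : 0 ≤ M2 := le_trans (norm_nonneg _) (hM2 _ h00)
  -- |pdr ψ r z| ≤ M1 * r on the closed rectangle
  have hub : ∀ r ∈ Icc (0:ℝ) R, ∀ z ∈ Icc (-a) a, |pdr ψ r z| ≤ M1 * r := by
    intro r hr z hz
    have h0m : (0:ℝ) ∈ Icc (0:ℝ) R := ⟨le_refl 0, hR.le⟩
    have := Convex.norm_image_sub_le_of_norm_hasDerivWithin_le
      (f := fun s => pdr ψ s z) (f' := fun s => pdr (pdr ψ) s z) (s := Icc (0:ℝ) R)
      (C := M1)
      (fun x hx => (hasDerivAt_pdr hu x z).hasDerivWithinAt)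
      (fun x hx => hM1 (x, z) ⟨hx, hz⟩) (convex_Icc _ _) h0m hr
    have h0 : pdr ψ 0 z = 0 := haxis z hz
    simpa [h0, Real.norm_eq_abs, abs_of_nonneg hr.1] using this
  -- quotient bound
  have hq : ∀ r ∈ Ioo (0:ℝ) R, ∀ z ∈ Icc (-a) a, |pdr ψ r z / r| ≤ M1 := by
    intro r hr z hz
    rw [abs_div, abs_of_pos hr.1, div_le_iff₀ hr.1]
    exact hub r ⟨hr.1.le, hr.2.le⟩ z hz
  -- boundary zeros
  have hva : ∀ z ∈ Ioo (-a) a, pdz ψ R z = 0 := by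
    intro z hz
    have hev : (fun w => ψ R w) =ᶠ[nhds z] (fun _ => (0:ℝ)) :=
      Filter.eventuallyEq_of_mem (isOpen_Ioo.mem_nhds hz)
        (fun w hw => hbR w (Ioo_subset_Icc_self hw))
    show deriv (fun w => ψ R w) z = 0
    rw [hev.deriv_eq]; exact deriv_const z 0
  have hua : ∀ r ∈ Ioo (0:ℝ) R, pdr ψ r a = 0 ∧ pdr ψ r (-a) = 0 := by
    intro r hr
    constructor
    · have hev : (fun s => ψ s a) =ᶠ[nhds r] (fun _ => (0:ℝ)) :=
        Filter.eventuallyEq_of_mem (isOpen_Ioo.mem_nhds hr)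
          (fun s hs => (hba s (Ioo_subset_Icc_self hs)).1)
      show deriv (fun s => ψ s a) r = 0
      rw [hev.deriv_eq]; exact deriv_const r 0
    · have hev : (fun s => ψ s (-a)) =ᶠ[nhds r] (fun _ => (0:ℝ)) :=
        Filter.eventuallyEq_of_mem (isOpen_Ioo.mem_nhds hr)
          (fun s hs => (hba s (Ioo_subset_Icc_self hs)).2)
      show deriv (fun s => ψ s (-a)) r = 0
      rw [hev.deriv_eq]; exact deriv_const r 0
  -- FTC in r for (pdr ψ)²/2
  have hA : ∀ z ∈ Icc (-a) a,
      ∫ r in Ioo (0:ℝ) R, pdr (pdr ψ) r z * pdr ψ r z = (1/2) * pdr ψ R z ^ 2 := by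
    intro z hz
    have := ftcIoo (F := fun s => pdr ψ s z ^ 2 / 2)
      (g := fun s => pdr (pdr ψ) s z * pdr ψ s z) hR.le
      (fun x => by
        have h1 : HasDerivAt (fun s => pdr ψ s z) (pdr (pdr ψ) x z) x :=
          hasDerivAt_pdr hu x z
        have h2 : HasDerivAt (fun s => pdr ψ s z * pdr ψ s z / 2)
            ((pdr (pdr ψ) x z * pdr ψ x z + pdr ψ x z * pdr (pdr ψ) x z) / 2) x :=
          (h1.mul h1).div_const 2
        have heq : (fun s => pdr ψ s z ^ 2 / 2) = fun s => pdr ψ s z * pdr ψ s z / 2 := by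
          funext s; ring
        rw [heq]
        convert h2 using 1; ring)
      (((cr huu z).mul (cr hu z)))
    rw [this]; simp only [haxis z hz]; ring
  -- FTC in r for (pdz ψ)²/2
  have hV : ∀ z ∈ Ioo (-a) a,
      ∫ r in Ioo (0:ℝ) R, pdz ψ r z * pdr (pdz ψ) r z = -((1/2) * pdz ψ 0 z ^ 2) := by
    intro z hz
    have := ftcIoo (F := fun s => pdz ψ s z ^ 2 / 2)
      (g := fun s => pdz ψ s z * pdr (pdz ψ) s z) hR.le
      (fun x => by
        have h1 : HasDerivAt (fun s => pdz ψ s z) (pdr (pdz ψ) x z) x :=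
          hasDerivAt_pdr hv x z
        have h2 : HasDerivAt (fun s => pdz ψ s z * pdz ψ s z / 2)
            ((pdr (pdz ψ) x z * pdz ψ x z + pdz ψ x z * pdr (pdz ψ) x z) / 2) x :=
          (h1.mul h1).div_const 2
        have heq : (fun s => pdz ψ s z ^ 2 / 2) = fun s => pdz ψ s z * pdz ψ s z / 2 := by
          funext s; ring
        rw [heq]
        convert h2 using 1; ring)
      (((cr hv z).mul (cr hvr z)))
    rw [this]; simp only [hva z hz]; ring
  -- FTC in z for (pdz ψ)(pdr ψ)
  have hJ : ∀ r ∈ Ioo (0:ℝ) R,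
      ∫ z in Ioo (-a) a,
        (pdz (pdz ψ) r z * pdr ψ r z + pdz ψ r z * pdz (pdr ψ) r z) = 0 := by
    intro r hr
    have := ftcIoo (F := fun t => pdz ψ r t * pdr ψ r t)
      (g := fun t => pdz (pdz ψ) r t * pdr ψ r t + pdz ψ r t * pdz (pdr ψ) r t)
      (by linarith : -a ≤ a)
      (fun t => (hasDerivAt_pdz hv r t).mul (hasDerivAt_pdz hu r t))
      (((cz hvv r).mul (cz hu r)).add ((cz hv r).mul (cz huz r)))
    rw [this]; simp only [(hua r hr).1, (hua r hr).2]; ring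
  -- pointwise rewriting of the PDE multiplied by (pdr ψ)/r · r
  have hptw : ∀ r ∈ Ioo (0:ℝ) R, ∀ z ∈ Ioo (-a) a,
      ω r z * (pdr ψ r z / r) * r
        = -(pdr (pdr ψ) r z * pdr ψ r z) - 3 * ((pdr ψ r z / r) ^ 2 * r)
          - (pdz (pdz ψ) r z * pdr ψ r z + pdz ψ r z * pdz (pdr ψ) r z)
          + pdz ψ r z * pdr (pdz ψ) r z := by
    intro r hr z hz
    have hrne : r ≠ 0 := ne_of_gt hr.1
    have hcm : pdr (pdz ψ) r z = pdz (pdr ψ) r z := pdr_pdz_comm hsm r z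
    rw [← hpde r hr z hz, hcm]
    field_simp
    ring
  have hωE : ∀ r ∈ Ioo (0:ℝ) R, ∀ z ∈ Ioo (-a) a,
      ω r z = -(pdr (pdr ψ) r z) - 3 * (pdr ψ r z / r) - pdz (pdz ψ) r z := by
    intro r hr z hz
    have hrne : r ≠ 0 := ne_of_gt hr.1
    rw [← hpde r hr z hz]
    field_simp
  have hωb : ∀ r ∈ Ioo (0:ℝ) R, ∀ z ∈ Ioo (-a) a, |ω r z| ≤ M1 + 3 * M1 + M2 := by
    intro r hr z hz
    rw [hωE r hr z hz]
    have b1 : |pdr (pdr ψ) r z| ≤ M1 := by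
      simpa using hM1 (r, z) ⟨Ioo_subset_Icc_self hr, Ioo_subset_Icc_self hz⟩
    have b2 : |pdr ψ r z / r| ≤ M1 := hq r hr z (Ioo_subset_Icc_self hz)
    have b3 : |pdz (pdz ψ) r z| ≤ M2 := by
      simpa using hM2 (r, z) ⟨Ioo_subset_Icc_self hr, Ioo_subset_Icc_self hz⟩
    have c1 := abs_le.mp b1
    have c2 := abs_le.mp b2
    have c3 := abs_le.mp b3
    rw [abs_le]
    constructor <;> [linarith [c1.1, c1.2, c2.1, c2.2, c3.1, c3.2];
      linarith [c1.1, c1.2, c2.1, c2.2, c3.1, c3.2]]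
  -- per-z integrability facts
  have ia : ∀ z : ℝ, IntegrableOn (fun r => pdr (pdr ψ) r z * pdr ψ r z) (Ioo (0:ℝ) R) :=
    fun z => int1d ((cr huu z).mul (cr hu z))
  have ik : ∀ z ∈ Icc (-a) a,
      IntegrableOn (fun r => (pdr ψ r z / r) ^ 2 * r) (Ioo (0:ℝ) R) := by
    intro z hz
    apply int1d' (C := M1 ^ 2 * R)
      ((((cr hu z).continuousOn.div continuousOn_id
        (fun r hr => ne_of_gt hr.1)).pow 2).mul continuousOn_id)
    intro r hr
    show |(pdr ψ r z / r) ^ 2 * r| ≤ M1 ^ 2 * R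
    have h1 := hq r hr z hz
    have habs : |(pdr ψ r z / r) ^ 2 * r| = (pdr ψ r z / r) ^ 2 * r :=
      abs_of_nonneg (mul_nonneg (sq_nonneg _) hr.1.le)
    rw [habs]
    have h2 : (pdr ψ r z / r) ^ 2 ≤ M1 ^ 2 := by
      nlinarith [sq_abs (pdr ψ r z / r), abs_nonneg (pdr ψ r z / r)]
    nlinarith [hr.2, hr.1.le, sq_nonneg (pdr ψ r z / r), hM1']
  have iP : ∀ z : ℝ, IntegrableOn
      (fun r => pdz (pdz ψ) r z * pdr ψ r z + pdz ψ r z * pdz (pdr ψ) r z) (Ioo (0:ℝ) R) :=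
    fun z => int1d (((cr hvv z).mul (cr hu z)).add ((cr hv z).mul (cr huz z)))
  have iD : ∀ z : ℝ, IntegrableOn (fun r => pdz ψ r z * pdr (pdz ψ) r z) (Ioo (0:ℝ) R) :=
    fun z => int1d ((cr hv z).mul (cr hvr z))
  have iω : ∀ z ∈ Ioo (-a) a,
      IntegrableOn (fun r => ω r z * (pdr ψ r z / r) * r) (Ioo (0:ℝ) R) := by
    intro z hz
    have hzc := Ioo_subset_Icc_self hz
    refine IntegrableOn.congr_fun
      ((((ia z).neg.sub ((ik z hzc).const_mul 3)).sub (iP z)).add (iD z))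
      (fun r hr => (hptw r hr z hz).symm) measurableSet_Ioo
  have iω2 : ∀ z ∈ Ioo (-a) a,
      IntegrableOn (fun r => ω r z ^ 2 * r) (Ioo (0:ℝ) R) := by
    intro z hz
    apply int1d' (C := (M1 + 3 * M1 + M2) ^ 2 * R)
    · have hEc : ContinuousOn
          (fun r => (-(pdr (pdr ψ) r z) - 3 * (pdr ψ r z / r) - pdz (pdz ψ) r z) ^ 2 * r)
          (Ioo (0:ℝ) R) := by
        have hdivc : ContinuousOn (fun r => pdr ψ r z / r) (Ioo (0:ℝ) R) :=
          (cr hu z).continuousOn.div continuousOn_id (fun r hr => ne_of_gt hr.1)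
        exact ((((cr huu z).continuousOn.neg.sub
          (continuousOn_const.mul hdivc)).sub (cr hvv z).continuousOn).pow 2).mul continuousOn_id
      exact hEc.congr (fun r hr => by rw [hωE r hr z hz])
    · intro r hr
      have b1 := hωb r hr z hz
      have habs : |ω r z ^ 2 * r| = ω r z ^ 2 * r :=
        abs_of_nonneg (mul_nonneg (sq_nonneg _) hr.1.le)
      rw [habs]
      have h2 : ω r z ^ 2 ≤ (M1 + 3 * M1 + M2) ^ 2 := by
        nlinarith [sq_abs (ω r z), abs_nonneg (ω r z)]
      nlinarith [hr.2, hr.1.le, sq_nonneg (ω r z), hM1', hM2']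
  -- product-measure integrability, for Fubini and for measurability in z
  have hprodset : MeasurableSet (Ioo (-a) a ×ˢ Ioo (0:ℝ) R) :=
    measurableSet_Ioo.prod measurableSet_Ioo
  have PK : Integrable (fun q : ℝ × ℝ => (pdr ψ q.2 q.1 / q.2) ^ 2 * q.2)
      ((volume.restrict (Ioo (-a) a)).prod (volume.restrict (Ioo (0:ℝ) R))) := by
    apply int2d' (C := M1 ^ 2 * R)
    · exact ((((cswap hu).continuousOn.div continuous_snd.continuousOn
        (fun p hp => ne_of_gt hp.2.1)).pow 2).mul continuous_snd.continuousOn)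
    · rintro ⟨z, r⟩ ⟨hz, hr⟩
      show |(pdr ψ r z / r) ^ 2 * r| ≤ M1 ^ 2 * R
      have h1 := hq r hr z (Ioo_subset_Icc_self hz)
      rw [abs_of_nonneg (mul_nonneg (sq_nonneg _) hr.1.le)]
      have h2 : (pdr ψ r z / r) ^ 2 ≤ M1 ^ 2 := by
        nlinarith [sq_abs (pdr ψ r z / r), abs_nonneg (pdr ψ r z / r)]
      nlinarith [hr.2, hr.1.le, sq_nonneg (pdr ψ r z / r), hM1']
  have PP : Integrable
      (fun q : ℝ × ℝ => pdz (pdz ψ) q.2 q.1 * pdr ψ q.2 q.1 + pdz ψ q.2 q.1 * pdz (pdr ψ) q.2 q.1)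
      ((volume.restrict (Ioo (-a) a)).prod (volume.restrict (Ioo (0:ℝ) R))) :=
    int2d (((cswap hvv).mul (cswap hu)).add ((cswap hv).mul (cswap huz)))
  have Pω : Integrable (fun q : ℝ × ℝ => ω q.2 q.1 * (pdr ψ q.2 q.1 / q.2) * q.2)
      ((volume.restrict (Ioo (-a) a)).prod (volume.restrict (Ioo (0:ℝ) R))) := by
    have base : Integrable (fun q : ℝ × ℝ =>
        -(pdr (pdr ψ) q.2 q.1 * pdr ψ q.2 q.1) - 3 * ((pdr ψ q.2 q.1 / q.2) ^ 2 * q.2)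
          - (pdz (pdz ψ) q.2 q.1 * pdr ψ q.2 q.1 + pdz ψ q.2 q.1 * pdz (pdr ψ) q.2 q.1)
          + pdz ψ q.2 q.1 * pdr (pdz ψ) q.2 q.1)
        ((volume.restrict (Ioo (-a) a)).prod (volume.restrict (Ioo (0:ℝ) R))) :=
      (((int2d ((cswap huu).mul (cswap hu))).neg.sub (PK.const_mul 3)).sub PP).add
        (int2d ((cswap hv).mul (cswap hvr)))
    apply base.congr
    rw [Measure.prod_restrict, Filter.EventuallyEq, ae_restrict_iff' hprodset]
    exact Filter.Eventually.of_forall (fun q hq => (hptw q.2 hq.2 q.1 hq.1).symm)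
  have PW : Integrable (fun q : ℝ × ℝ => ω q.2 q.1 ^ 2 * q.2)
      ((volume.restrict (Ioo (-a) a)).prod (volume.restrict (Ioo (0:ℝ) R))) := by
    apply int2d' (C := (M1 + 3 * M1 + M2) ^ 2 * R)
    · have hdivc : ContinuousOn (fun q : ℝ × ℝ => pdr ψ q.2 q.1 / q.2)
          (Ioo (-a) a ×ˢ Ioo (0:ℝ) R) :=
        (cswap hu).continuousOn.div continuous_snd.continuousOn (fun p hp => ne_of_gt hp.2.1)
      have hEc : ContinuousOn (fun q : ℝ × ℝ =>
          (-(pdr (pdr ψ) q.2 q.1) - 3 * (pdr ψ q.2 q.1 / q.2) - pdz (pdz ψ) q.2 q.1) ^ 2 * q.2)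
          (Ioo (-a) a ×ˢ Ioo (0:ℝ) R) :=
        ((((cswap huu).continuousOn.neg.sub (continuousOn_const.mul hdivc)).sub
          (cswap hvv).continuousOn).pow 2).mul continuous_snd.continuousOn
      exact hEc.congr (fun q hq => by rw [hωE q.2 hq.2 q.1 hq.1])
    · rintro ⟨z, r⟩ ⟨hz, hr⟩
      show |ω r z ^ 2 * r| ≤ (M1 + 3 * M1 + M2) ^ 2 * R
      have b1 := hωb r hr z hz
      rw [abs_of_nonneg (mul_nonneg (sq_nonneg _) hr.1.le)]
      have h2 : ω r z ^ 2 ≤ (M1 + 3 * M1 + M2) ^ 2 := by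
        nlinarith [sq_abs (ω r z), abs_nonneg (ω r z)]
      nlinarith [hr.2, hr.1.le, sq_nonneg (ω r z), hM1', hM2']
  -- integrability in z of the inner integrals
  have iK2 : IntegrableOn (fun z => ∫ r in Ioo (0:ℝ) R, (pdr ψ r z / r) ^ 2 * r)
      (Ioo (-a) a) := PK.integral_prod_left
  have iJ2 : IntegrableOn (fun z => ∫ r in Ioo (0:ℝ) R,
      (pdz (pdz ψ) r z * pdr ψ r z + pdz ψ r z * pdz (pdr ψ) r z)) (Ioo (-a) a) :=
    PP.integral_prod_left
  have iωz : IntegrableOn (fun z => ∫ r in Ioo (0:ℝ) R, ω r z * (pdr ψ r z / r) * r)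
      (Ioo (-a) a) := Pω.integral_prod_left
  have iWz : IntegrableOn (fun z => ∫ r in Ioo (0:ℝ) R, ω r z ^ 2 * r)
      (Ioo (-a) a) := PW.integral_prod_left
  have iBr1 : IntegrableOn (fun z => pdr ψ R z ^ 2) (Ioo (-a) a) := int1d ((cz hu R).pow 2)
  have iBz1 : IntegrableOn (fun z => pdz ψ 0 z ^ 2) (Ioo (-a) a) := int1d ((cz hv 0).pow 2)
  -- Fubini: the mixed term integrates to zero
  have hJz : ∫ z in Ioo (-a) a, ∫ r in Ioo (0:ℝ) R,
      (pdz (pdz ψ) r z * pdr ψ r z + pdz ψ r z * pdz (pdr ψ) r z) = 0 := by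
    rw [integral_integral_swap PP]
    rw [setIntegral_congr_fun measurableSet_Ioo (fun r hr => hJ r hr)]
    simp
  -- the inner identity
  have hInner : ∀ z ∈ Ioo (-a) a,
      ∫ r in Ioo (0:ℝ) R, ω r z * (pdr ψ r z / r) * r
        = -(1 / 2 * pdr ψ R z ^ 2) - 3 * (∫ r in Ioo (0:ℝ) R, (pdr ψ r z / r) ^ 2 * r)
          - (∫ r in Ioo (0:ℝ) R, (pdz (pdz ψ) r z * pdr ψ r z + pdz ψ r z * pdz (pdr ψ) r z))
          - 1 / 2 * pdz ψ 0 z ^ 2 := by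
    intro z hz
    have hzc := Ioo_subset_Icc_self hz
    rw [setIntegral_congr_fun measurableSet_Ioo (fun r hr => hptw r hr z hz)]
    have h1 : IntegrableOn (fun r => -(pdr (pdr ψ) r z * pdr ψ r z)) (Ioo (0:ℝ) R) := (ia z).neg
    have h2 : IntegrableOn (fun r => -(pdr (pdr ψ) r z * pdr ψ r z)
        - 3 * ((pdr ψ r z / r) ^ 2 * r)) (Ioo (0:ℝ) R) := h1.sub ((ik z hzc).const_mul 3)
    have h3 : IntegrableOn (fun r => -(pdr (pdr ψ) r z * pdr ψ r z)
        - 3 * ((pdr ψ r z / r) ^ 2 * r)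
        - (pdz (pdz ψ) r z * pdr ψ r z + pdz ψ r z * pdz (pdr ψ) r z)) (Ioo (0:ℝ) R) :=
      h2.sub (iP z)
    rw [integral_add h3 (iD z), integral_sub h2 (iP z),
        integral_sub h1 ((ik z hzc).const_mul 3), integral_neg, integral_const_mul]
    rw [hA z hzc, hV z hz]
    ring
  -- the outer identity
  have houter : (∫ z in Ioo (-a) a, ∫ r in Ioo (0:ℝ) R, ω r z * (pdr ψ r z / r) * r)
      = -(1 / 2 * ∫ z in Ioo (-a) a, pdr ψ R z ^ 2)
        - 3 * (∫ z in Ioo (-a) a, ∫ r in Ioo (0:ℝ) R, (pdr ψ r z / r) ^ 2 * r)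
        - 1 / 2 * ∫ z in Ioo (-a) a, pdz ψ 0 z ^ 2 := by
    rw [setIntegral_congr_fun measurableSet_Ioo (fun z hz => hInner z hz)]
    have g1 : IntegrableOn (fun z => -(1 / 2 * pdr ψ R z ^ 2)) (Ioo (-a) a) :=
      (iBr1.const_mul (1/2)).neg
    have g2 : IntegrableOn (fun z => -(1 / 2 * pdr ψ R z ^ 2)
        - 3 * (∫ r in Ioo (0:ℝ) R, (pdr ψ r z / r) ^ 2 * r)) (Ioo (-a) a) :=
      g1.sub (iK2.const_mul 3)
    have g3 : IntegrableOn (fun z => -(1 / 2 * pdr ψ R z ^ 2)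
        - 3 * (∫ r in Ioo (0:ℝ) R, (pdr ψ r z / r) ^ 2 * r)
        - (∫ r in Ioo (0:ℝ) R,
            (pdz (pdz ψ) r z * pdr ψ r z + pdz ψ r z * pdz (pdr ψ) r z))) (Ioo (-a) a) :=
      g2.sub iJ2
    rw [integral_sub g3 (iBz1.const_mul (1/2)), integral_sub g2 iJ2,
        integral_sub g1 (iK2.const_mul 3), integral_neg, integral_const_mul,
        integral_const_mul, integral_const_mul, hJz]
    ring
  constructor
  · rw [houter]; ring
  · refine ⟨1/3, by norm_num, ?_⟩
    have hS0 : 0 ≤ ∫ z in Ioo (-a) a, ∫ r in Ioo (0:ℝ) R, (pdr ψ r z / r) ^ 2 * r :=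
      setIntegral_nonneg measurableSet_Ioo (fun z _ => setIntegral_nonneg measurableSet_Ioo
        (fun r hr => mul_nonneg (sq_nonneg _) hr.1.le))
    have hBr0 : 0 ≤ ∫ z in Ioo (-a) a, pdr ψ R z ^ 2 :=
      setIntegral_nonneg measurableSet_Ioo (fun z _ => sq_nonneg _)
    have hBz0 : 0 ≤ ∫ z in Ioo (-a) a, pdz ψ 0 z ^ 2 :=
      setIntegral_nonneg measurableSet_Ioo (fun z _ => sq_nonneg _)
    have hsplit : ∫ z in Ioo (-a) a, (pdr ψ R z ^ 2 + pdz ψ 0 z ^ 2)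
        = (∫ z in Ioo (-a) a, pdr ψ R z ^ 2) + ∫ z in Ioo (-a) a, pdz ψ 0 z ^ 2 :=
      integral_add iBr1 iBz1
    -- pointwise Young inequality, integrated in r
    have hmono : ∀ z ∈ Ioo (-a) a,
        (∫ r in Ioo (0:ℝ) R, -(ω r z * (pdr ψ r z / r) * r))
          ≤ ∫ r in Ioo (0:ℝ) R,
              (3/2 * ((pdr ψ r z / r) ^ 2 * r) + 1/6 * (ω r z ^ 2 * r)) := by
      intro z hz
      have hzc := Ioo_subset_Icc_self hz
      apply setIntegral_mono_on (iω z hz).neg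
        (((ik z hzc).const_mul (3/2)).add ((iω2 z hz).const_mul (1/6))) measurableSet_Ioo
      intro r hr
      show -(ω r z * (pdr ψ r z / r) * r)
          ≤ 3/2 * ((pdr ψ r z / r) ^ 2 * r) + 1/6 * (ω r z ^ 2 * r)
      nlinarith [mul_nonneg (sq_nonneg (3 * (pdr ψ r z / r) + ω r z)) hr.1.le]
    have hkey : -(∫ z in Ioo (-a) a, ∫ r in Ioo (0:ℝ) R, ω r z * (pdr ψ r z / r) * r)
        ≤ 3/2 * (∫ z in Ioo (-a) a, ∫ r in Ioo (0:ℝ) R, (pdr ψ r z / r) ^ 2 * r)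
          + 1/6 * (∫ z in Ioo (-a) a, ∫ r in Ioo (0:ℝ) R, ω r z ^ 2 * r) := by
      have e1 : -(∫ z in Ioo (-a) a, ∫ r in Ioo (0:ℝ) R, ω r z * (pdr ψ r z / r) * r)
          = ∫ z in Ioo (-a) a, ∫ r in Ioo (0:ℝ) R, -(ω r z * (pdr ψ r z / r) * r) := by
        rw [← integral_neg]
        exact setIntegral_congr_fun measurableSet_Ioo
          (fun z _ => (integral_neg _).symm)
      have estep : ∀ z ∈ Ioo (-a) a, (∫ r in Ioo (0:ℝ) R,
            (3/2 * ((pdr ψ r z / r) ^ 2 * r) + 1/6 * (ω r z ^ 2 * r)))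
          = 3/2 * (∫ r in Ioo (0:ℝ) R, (pdr ψ r z / r) ^ 2 * r)
            + 1/6 * (∫ r in Ioo (0:ℝ) R, ω r z ^ 2 * r) := by
        intro z hz
        have hzc := Ioo_subset_Icc_self hz
        rw [integral_add ((ik z hzc).const_mul (3/2)) ((iω2 z hz).const_mul (1/6)),
            integral_const_mul, integral_const_mul]
      have e2 : (∫ z in Ioo (-a) a, ∫ r in Ioo (0:ℝ) R,
            (3/2 * ((pdr ψ r z / r) ^ 2 * r) + 1/6 * (ω r z ^ 2 * r)))
          = 3/2 * (∫ z in Ioo (-a) a, ∫ r in Ioo (0:ℝ) R, (pdr ψ r z / r) ^ 2 * r)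
            + 1/6 * (∫ z in Ioo (-a) a, ∫ r in Ioo (0:ℝ) R, ω r z ^ 2 * r) := by
        rw [setIntegral_congr_fun measurableSet_Ioo estep]
        rw [integral_add (iK2.const_mul (3/2)) (iWz.const_mul (1/6)),
            integral_const_mul, integral_const_mul]
      calc -(∫ z in Ioo (-a) a, ∫ r in Ioo (0:ℝ) R, ω r z * (pdr ψ r z / r) * r)
          = ∫ z in Ioo (-a) a, ∫ r in Ioo (0:ℝ) R, -(ω r z * (pdr ψ r z / r) * r) := e1
        _ ≤ ∫ z in Ioo (-a) a, ∫ r in Ioo (0:ℝ) R,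
              (3/2 * ((pdr ψ r z / r) ^ 2 * r) + 1/6 * (ω r z ^ 2 * r)) := by
            apply setIntegral_mono_on
            · have : IntegrableOn (fun z => -(∫ r in Ioo (0:ℝ) R,
                  ω r z * (pdr ψ r z / r) * r)) (Ioo (-a) a) := iωz.neg
              apply this.congr_fun (fun z _ => (integral_neg _).symm) measurableSet_Ioo
            · have base : IntegrableOn (fun z =>
                  3/2 * (∫ r in Ioo (0:ℝ) R, (pdr ψ r z / r) ^ 2 * r)
                  + 1/6 * (∫ r in Ioo (0:ℝ) R, ω r z ^ 2 * r)) (Ioo (-a) a) :=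
                (iK2.const_mul (3/2)).add (iWz.const_mul (1/6))
              exact base.congr_fun (fun z hz => (estep z hz).symm) measurableSet_Ioo
            · exact measurableSet_Ioo
            · intro z hz
              exact hmono z hz
        _ = _ := e2
    rw [hsplit]
    linarith [hS0, hBr0, hBz0, hkey, houter]
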